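/- The language L_sep is not a boolean combination of Σ₂ subsets of {a,b}^ω. -/

import Mathlib

namespace MaxReg

/-! ### Counter operations and boolean combinations -/

inductive CounterOp (C : Type) where
  | inc (c : C)
  | reset (c : C)
  | output (c : C)
  | maxOp (c d : C)

def applyOp {C : Type} [DecidableEq C] (v : C → ℕ) :
    CounterOp C → (C → ℕ) × Option (C × ℕ)
  | .inc c => (Function.update v c (v c + 1), none)
  | .reset c => (Function.update v c 0, none)
  | .output c => (v, some (c, v c))
  | .maxOp c d => (Function.update v c (max (v c) (v d)), none)

def applyOps {C : Type} [DecidableEq C] :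
    List (CounterOp C) → (C → ℕ) → (C → ℕ) × List (C × ℕ)
  | [], v => (v, [])
  | op :: ops, v =>
      let p := applyOp v op
      let r := applyOps ops p.1
      (r.1, p.2.toList ++ r.2)

/-- Boolean combinations with atoms in `σ` (used for acceptance conditions:
the atom `c` stands for "the sequence of values output on counter `c` is bounded"). -/
inductive BC (σ : Type) where
  | tt
  | atom (a : σ)
  | nt (φ : BC σ)
  | an (φ ψ : BC σ)

def BC.eval {σ : Type} (f : σ → Prop) : BC σ → Prop
  | .tt => True
  | .atom a => f a
  | .nt φ => ¬ φ.eval f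
  | .an φ ψ => φ.eval f ∧ ψ.eval f

/-! ### Deterministic max-automata -/

structure MaxAutomaton (α : Type) where
  Q : Type
  C : Type
  [finQ : Fintype Q]
  [finC : Fintype C]
  [decC : DecidableEq C]
  init : Q
  δ : Q → α → Q × List (CounterOp C)
  acc : BC C

attribute [instance] MaxAutomaton.finQ MaxAutomaton.finC MaxAutomaton.decC

namespace MaxAutomaton

variable {α : Type} (A : MaxAutomaton α)

/-- The state at position `n` of the unique run on `w`, started in state `q`
(at position `0`). -/
def runFrom (q : A.Q) (w : ℕ → α) : ℕ → A.Q
  | 0 => q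
  | n + 1 => (A.δ (runFrom q w n) (w n)).1

/-- Counter values before reading the letter at position `n` (all counters start at `0`). -/
def valsFrom (q : A.Q) (w : ℕ → α) : ℕ → (A.C → ℕ)
  | 0 => fun _ => 0
  | n + 1 => (applyOps (A.δ (A.runFrom q w n) (w n)).2 (valsFrom q w n)).1

/-- The (counter, value) pairs output while reading the letter at position `n`. -/
def outsFrom (q : A.Q) (w : ℕ → α) (n : ℕ) : List (A.C × ℕ) :=
  (applyOps (A.δ (A.runFrom q w n) (w n)).2 (A.valsFrom q w n)).2

/-- "The sequence `ρ_c` of values output on counter `c` is bounded." -/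
def BoundedFrom (q : A.Q) (w : ℕ → α) (c : A.C) : Prop :=
  ∃ B, ∀ n, ∀ p ∈ A.outsFrom q w n, p.1 = c → p.2 ≤ B

def AcceptsFrom (q : A.Q) (w : ℕ → α) : Prop :=
  A.acc.eval (A.BoundedFrom q w)

def Accepts (w : ℕ → α) : Prop := A.AcceptsFrom A.init w

def Lang : Set (ℕ → α) := { w | A.Accepts w }

/-- One step on a configuration (state, counter valuation), for reading finite words. -/
def stepList (p : A.Q × (A.C → ℕ)) (a : α) : A.Q × (A.C → ℕ) :=
  ((A.δ p.1 a).1, (applyOps (A.δ p.1 a).2 p.2).1)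

/-- Configuration (state, counter valuation) reached after reading a finite word
from the initial state with all counters `0`. -/
def readConfig (l : List α) : A.Q × (A.C → ℕ) :=
  l.foldl A.stepList (A.init, fun _ => 0)

end MaxAutomaton

/-! ### Annotating words with sets -/

/-- `w[X]` : extend each letter of `w` with the bit `1` exactly at the positions in `X`. -/
def withSet {α : Type} (w : ℕ → α) (X : Finset ℕ) : ℕ → α × Bool :=
  fun n => (w n, decide (n ∈ X))

/-- `w[X₁,…,Xₙ]` : extend each letter of `w` with a bit vector. -/
def withSets {α : Type} {n : ℕ} (w : ℕ → α) (Xs : Fin n → Finset ℕ) :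
    ℕ → α × (Fin n → Bool) :=
  fun m => (w m, fun i => decide (m ∈ Xs i))

/-- Annotate a finite word with a set of positions. -/
def encodeList {α : Type} (l : List α) (X : Finset ℕ) : List (α × Bool) :=
  l.zipIdx.map (fun p => (p.1, decide (p.2 ∈ X)))

/-- `UL` : the words `w` such that `w[X] ∈ L` for arbitrarily large finite sets `X`. -/
def UL {α : Type} (L : Set (ℕ → α × Bool)) : Set (ℕ → α) :=
  { w | ∀ n : ℕ, ∃ X : Finset ℕ, n ≤ X.card ∧ withSet w X ∈ L }

/-- `max(q, l)` : maximal cardinality of a set `X` of positions of `l` such that `A`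
reaches state `q` after reading `l[X]` (and `0` if there is no such set). -/
noncomputable def maxReach {α : Type} (A : MaxAutomaton (α × Bool)) (q : A.Q)
    (l : List α) : ℕ :=
  sSup { k | ∃ X : Finset ℕ, (∀ x ∈ X, x < l.length) ∧ X.card = k ∧
    (A.readConfig (encodeList l X)).1 = q }

def suffixFrom {α : Type} (w : ℕ → α) (n : ℕ) : ℕ → α := fun k => w (n + k)

def prefixList {α : Type} (w : ℕ → α) (n : ℕ) : List α := (List.range n).map w

/-! ### WMSO+U and MSO+U formulas -/

inductive Formula (α : Type) where
  | letter (a : α) (x : ℕ)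
  | mem (x X : ℕ)
  | le (x y : ℕ)
  | not (φ : Formula α)
  | and (φ ψ : Formula α)
  | exFO (x : ℕ) (φ : Formula α)
  | exSO (X : ℕ) (φ : Formula α)
  | U (X : ℕ) (φ : Formula α)

/-- Weak semantics: set variables range over finite sets of positions. -/
def Sat {α : Type} (w : ℕ → α) (v1 : ℕ → ℕ) (v2 : ℕ → Finset ℕ) :
    Formula α → Prop
  | .letter a x => w (v1 x) = a
  | .mem x X => v1 x ∈ v2 X
  | .le x y => v1 x ≤ v1 y
  | .not φ => ¬ Sat w v1 v2 φ
  | .and φ ψ => Sat w v1 v2 φ ∧ Sat w v1 v2 ψ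
  | .exFO x φ => ∃ k : ℕ, Sat w (Function.update v1 x k) v2 φ
  | .exSO X φ => ∃ S : Finset ℕ, Sat w v1 (Function.update v2 X S) φ
  | .U X φ => ∀ n : ℕ, ∃ S : Finset ℕ, n ≤ S.card ∧
      Sat w v1 (Function.update v2 X S) φ

/-- Full semantics: set variables range over arbitrary subsets of ℕ; the
unbounding quantifier still speaks about finite sets. -/
def SatFull {α : Type} (w : ℕ → α) (v1 : ℕ → ℕ) (v2 : ℕ → Set ℕ) :
    Formula α → Prop
  | .letter a x => w (v1 x) = a
  | .mem x X => v1 x ∈ v2 X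
  | .le x y => v1 x ≤ v1 y
  | .not φ => ¬ SatFull w v1 v2 φ
  | .and φ ψ => SatFull w v1 v2 φ ∧ SatFull w v1 v2 ψ
  | .exFO x φ => ∃ k : ℕ, SatFull w (Function.update v1 x k) v2 φ
  | .exSO X φ => ∃ S : Set ℕ, SatFull w v1 (Function.update v2 X S) φ
  | .U X φ => ∀ n : ℕ, ∃ S : Finset ℕ, n ≤ S.card ∧
      SatFull w v1 (Function.update v2 X (↑S : Set ℕ)) φ

def freeFO {α : Type} : Formula α → Finset ℕ
  | .letter _ x => {x}
  | .mem x _ => {x}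
  | .le x y => {x, y}
  | .not φ => freeFO φ
  | .and φ ψ => freeFO φ ∪ freeFO ψ
  | .exFO x φ => freeFO φ \ {x}
  | .exSO _ φ => freeFO φ
  | .U _ φ => freeFO φ

def freeSO {α : Type} : Formula α → Finset ℕ
  | .letter _ _ => ∅
  | .mem _ X => {X}
  | .le _ _ => ∅
  | .not φ => freeSO φ
  | .and φ ψ => freeSO φ ∪ freeSO ψ
  | .exFO _ φ => freeSO φ
  | .exSO X φ => freeSO φ \ {X}
  | .U X φ => freeSO φ \ {X}

def Sentence {α : Type} (φ : Formula α) : Prop :=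
  freeFO φ = ∅ ∧ freeSO φ = ∅

/-- `L` is definable by a sentence of WMSO+U. -/
def DefinableW {α : Type} (L : Set (ℕ → α)) : Prop :=
  ∃ φ : Formula α, Sentence φ ∧
    L = { w | Sat w (fun _ => 0) (fun _ => (∅ : Finset ℕ)) φ }

/-- `L` is definable by a sentence of full MSO+U. -/
def DefinableF {α : Type} (L : Set (ℕ → α)) : Prop :=
  ∃ φ : Formula α, Sentence φ ∧
    L = { w | SatFull w (fun _ => 0) (fun _ => (∅ : Set ℕ)) φ }

/-- `φ` contains no occurrence of the unbounding quantifier. -/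
def UFree {α : Type} : Formula α → Prop
  | .letter _ _ => True
  | .mem _ _ => True
  | .le _ _ => True
  | .not φ => UFree φ
  | .and φ ψ => UFree φ ∧ UFree ψ
  | .exFO _ φ => UFree φ
  | .exSO _ φ => UFree φ
  | .U _ _ => False

/-- Boolean combinations of formulas `U X. φ` with `φ` free of the unbounding
quantifier. -/
inductive IsUNormal {α : Type} : Formula α → Prop
  | base (X : ℕ) (φ : Formula α) : UFree φ → IsUNormal (.U X φ)
  | not {φ : Formula α} : IsUNormal φ → IsUNormal (.not φ)
  | and {φ ψ : Formula α} : IsUNormal φ → IsUNormal ψ →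
      IsUNormal (.and φ ψ)

/-! ### Deterministic Muller automata -/

structure MullerAutomaton (α : Type) where
  Q : Type
  [finQ : Fintype Q]
  init : Q
  δ : Q → α → Q
  F : Set (Set Q)

attribute [instance] MullerAutomaton.finQ

namespace MullerAutomaton

variable {α : Type} (M : MullerAutomaton α)

def run (w : ℕ → α) : ℕ → M.Q
  | 0 => M.init
  | n + 1 => M.δ (run w n) (w n)

/-- States occurring infinitely often in the run on `w`. -/
def InfOcc (w : ℕ → α) : Set M.Q :=
  { q | ∀ n : ℕ, ∃ m, n ≤ m ∧ M.run w m = q }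

def Lang : Set (ℕ → α) := { w | M.InfOcc w ∈ M.F }

end MullerAutomaton

/-! ### Partial runs, convergence, spanning sets -/

section PartialRuns

variable {Q α : Type}

/-- State at position `n + k` of the run seeded at configuration `(q, n)`. -/
def runSeed (δ : Q → α → Q) (w : ℕ → α) (q : Q) (n : ℕ) : ℕ → Q
  | 0 => q
  | k + 1 => δ (runSeed δ w q n k) (w (n + k))

/-- The partial run seeded at configuration `(q, n)`. -/
def seeded (δ : Q → α → Q) (w : ℕ → α) (q : Q) (n : ℕ) : ℕ → Option Q :=
  fun m => if _h : n ≤ m then some (runSeed δ w q n (m - n)) else none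

/-- A partial run over `w`: either the nowhere-defined run or a seeded run. -/
def IsPartialRun (δ : Q → α → Q) (w : ℕ → α) (ρ : ℕ → Option Q) : Prop :=
  ρ = (fun _ => none) ∨ ∃ q n, ρ = seeded δ w q n

/-- Two partial runs converge if they agree from some position on. -/
def Converge (ρ₁ ρ₂ : ℕ → Option Q) : Prop :=
  ∃ N : ℕ, ∀ m, N ≤ m → ρ₁ m = ρ₂ m

/-- A set of partial runs spans `w` if every partial run over `w` converges with
some member of the set. -/
def Spans (δ : Q → α → Q) (w : ℕ → α) (S : Set (ℕ → Option Q)) : Prop :=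
  ∀ ρ, IsPartialRun δ w ρ → ∃ ρ' ∈ S, Converge ρ ρ'

end PartialRuns

/-! ### Deterministic letter-to-letter transducers -/

structure Transducer (α β : Type) where
  Q : Type
  [finQ : Fintype Q]
  init : Q
  δ : Q → α → Q
  out : Q → α → β

attribute [instance] Transducer.finQ

namespace Transducer

variable {α β : Type} (T : Transducer α β)

def run (w : ℕ → α) : ℕ → T.Q
  | 0 => T.init
  | n + 1 => T.δ (run w n) (w n)

/-- The function `Σ^ω → Γ^ω` computed by the transducer. -/
def f (w : ℕ → α) : ℕ → β := fun n => T.out (T.run w n) (w n)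

end Transducer

open Classical in
/-- Decode a word over `Q × {0,1}` as a partial run: position `m` is defined (with the
state recorded at `m`) iff all markers from position `m` on are `1`. -/
noncomputable def decode {Q : Type} (u : ℕ → Q × Bool) : ℕ → Option Q :=
  fun m => if (∀ j, m ≤ j → (u j).2 = true) then some (u m).1 else none

/-! ### Guarded max-automata -/

inductive GOp (C α : Type) where
  | inc (c : C)
  | reset (c : C)
  | output (c : C)
  | maxOp (c d : C)
  /-- `if G then output c` : output the value of `c` only if the suffix of the input
  beginning at the next position belongs to `G`. -/
  | goutput (G : Set (ℕ → α)) (c : C)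

open Classical in
noncomputable def applyGOp {C α : Type} [DecidableEq C] (suffix : ℕ → α)
    (v : C → ℕ) : GOp C α → (C → ℕ) × Option (C × ℕ)
  | .inc c => (Function.update v c (v c + 1), none)
  | .reset c => (Function.update v c 0, none)
  | .output c => (v, some (c, v c))
  | .maxOp c d => (Function.update v c (max (v c) (v d)), none)
  | .goutput G c => (v, if suffix ∈ G then some (c, v c) else none)

noncomputable def applyGOps {C α : Type} [DecidableEq C] (suffix : ℕ → α) :
    List (GOp C α) → (C → ℕ) → (C → ℕ) × List (C × ℕ)
  | [], v => (v, [])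
  | op :: ops, v =>
      let p := applyGOp suffix v op
      let r := applyGOps suffix ops p.1
      (r.1, p.2.toList ++ r.2)

def GOp.WF {C α : Type} : GOp C α → Prop
  | .goutput G _ => ∃ A : MaxAutomaton α, A.Lang = G
  | _ => True

structure GuardedMaxAutomaton (α : Type) where
  Q : Type
  C : Type
  [finQ : Fintype Q]
  [finC : Fintype C]
  [decC : DecidableEq C]
  init : Q
  δ : Q → α → Q × List (GOp C α)
  acc : BC C

attribute [instance] GuardedMaxAutomaton.finQ GuardedMaxAutomaton.finC
  GuardedMaxAutomaton.decC

namespace GuardedMaxAutomaton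

variable {α : Type} (B : GuardedMaxAutomaton α)

/-- All guards used by the automaton are languages recognized by deterministic
max-automata. -/
def WF : Prop := ∀ q a, ∀ op ∈ (B.δ q a).2, op.WF

def run (w : ℕ → α) : ℕ → B.Q
  | 0 => B.init
  | n + 1 => (B.δ (run w n) (w n)).1

noncomputable def vals (w : ℕ → α) : ℕ → (B.C → ℕ)
  | 0 => fun _ => 0
  | n + 1 =>
      (applyGOps (suffixFrom w (n + 1)) (B.δ (B.run w n) (w n)).2 (vals w n)).1

noncomputable def outs (w : ℕ → α) (n : ℕ) : List (B.C × ℕ) :=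
  (applyGOps (suffixFrom w (n + 1)) (B.δ (B.run w n) (w n)).2 (B.vals w n)).2

def Bounded (w : ℕ → α) (c : B.C) : Prop :=
  ∃ Bd, ∀ n, ∀ p ∈ B.outs w n, p.1 = c → p.2 ≤ Bd

def Accepts (w : ℕ → α) : Prop := B.acc.eval (B.Bounded w)

def Lang : Set (ℕ → α) := { w | B.Accepts w }

end GuardedMaxAutomaton

/-! ### Nondeterministic max-automata -/

structure NMaxAutomaton (α : Type) where
  Q : Type
  C : Type
  [finQ : Fintype Q]
  [finC : Fintype C]
  [decC : DecidableEq C]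
  init : Q
  δ : Q → α → Set (Q × List (CounterOp C))
  acc : BC C

attribute [instance] NMaxAutomaton.finQ NMaxAutomaton.finC NMaxAutomaton.decC

/-- Counter values along a sequence of counter-operation lists. -/
def nvals {C : Type} [DecidableEq C] (ops : ℕ → List (CounterOp C)) :
    ℕ → (C → ℕ)
  | 0 => fun _ => 0
  | n + 1 => (applyOps (ops n) (nvals ops n)).1

def nouts {C : Type} [DecidableEq C] (ops : ℕ → List (CounterOp C)) (n : ℕ) :
    List (C × ℕ) :=
  (applyOps (ops n) (nvals ops n)).2

namespace NMaxAutomaton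

variable {α : Type} (A : NMaxAutomaton α)

def Accepts (w : ℕ → α) : Prop :=
  ∃ (q : ℕ → A.Q) (ops : ℕ → List (CounterOp A.C)),
    q 0 = A.init ∧
    (∀ n, (q (n + 1), ops n) ∈ A.δ (q n) (w n)) ∧
    A.acc.eval (fun c => ∃ B, ∀ n, ∀ p ∈ nouts ops n, p.1 = c → p.2 ≤ B)

def Lang : Set (ℕ → α) := { w | A.Accepts w }

end NMaxAutomaton

/-! ### The separating language -/

/-- Position of the `k`-th letter `b` in `a^{ns 0} b a^{ns 1} b ⋯` (0-indexed). -/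
def bpos (ns : ℕ → ℕ) (k : ℕ) : ℕ := (∑ i ∈ Finset.range (k + 1), ns i) + k

/-- `L_sep` over the alphabet `{a, b}` (with `a = false`, `b = true`): words
`a^{n₁} b a^{n₂} b ⋯` such that some number appears infinitely often in `n₁, n₂, …`. -/
def Lsep : Set (ℕ → Bool) :=
  { w | ∃ ns : ℕ → ℕ,
      (∀ m, w m = true ↔ ∃ k, bpos ns k = m) ∧
      ∃ v, { i | ns i = v }.Infinite }

/-! ### Topological notions -/

/-- A `Σ₂` set: a countable union of closed sets. -/
def IsSigma2 {X : Type} [TopologicalSpace X] (S : Set X) : Prop :=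
  ∃ F : ℕ → Set X, (∀ n, IsClosed (F n)) ∧ S = ⋃ n, F n

/-- Boolean combinations of `Σ₂` sets. -/
inductive IsBoolCombSigma2 {X : Type} [TopologicalSpace X] : Set X → Prop
  | base {S : Set X} : IsSigma2 S → IsBoolCombSigma2 S
  | compl {S : Set X} : IsBoolCombSigma2 S → IsBoolCombSigma2 Sᶜ
  | inter {S T : Set X} : IsBoolCombSigma2 S → IsBoolCombSigma2 T →
      IsBoolCombSigma2 (S ∩ T)


section NotBC
open Set

abbrev Cant := ℕ → Bool

/-- prefix of length m -/
def pre (x : Cant) (m : ℕ) : List Bool := (List.range m).map x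

@[simp] lemma pre_length (x : Cant) (m : ℕ) : (pre x m).length = m := by simp [pre]

lemma pre_take {m r : ℕ} (h : m ≤ r) (x : Cant) : (pre x r).take m = pre x m := by
  simp [pre, ← List.map_take, List.take_range, Nat.min_eq_left h]

lemma pre_eq_iff {x y : Cant} {r : ℕ} : pre x r = pre y r ↔ ∀ i < r, x i = y i := by
  constructor
  · intro h i hi
    have h1 : (pre x r)[i]'(by simpa using hi) = x i := by simp [pre]
    have h2 : (pre y r)[i]'(by simpa using hi) = y i := by simp [pre]
    rw [← h1, ← h2]; congr 1
  · intro h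
    exact List.map_congr_left (fun a ha => h a (List.mem_range.mp ha))

lemma cyl_isOpen (x : Cant) (r : ℕ) : IsOpen {y : Cant | pre y r = pre x r} := by
  have : {y : Cant | pre y r = pre x r} = Set.pi (↑(Finset.range r) : Set ℕ) (fun i => {x i}) := by
    ext y
    simp only [Set.mem_setOf_eq, Set.mem_pi, Finset.coe_range, Set.mem_Iio, Set.mem_singleton_iff]
    exact pre_eq_iff
  rw [this]
  exact isOpen_set_pi (Set.finite_Iio r |>.subset (by simp [Finset.coe_range])) (fun a _ => isOpen_discrete _)

lemma isOpen_of_pre {S : Set Cant}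
    (h : ∀ x ∈ S, ∃ r, ∀ y : Cant, pre y r = pre x r → y ∈ S) : IsOpen S := by
  rw [isOpen_iff_forall_mem_open]
  intro x hx
  obtain ⟨r, hr⟩ := h x hx
  exact ⟨{y | pre y r = pre x r}, fun y hy => hr y hy, cyl_isOpen x r, rfl⟩

lemma exists_pre_subset {U : Set Cant} (hU : IsOpen U) {x : Cant} (hx : x ∈ U) :
    ∃ r, ∀ y : Cant, pre y r = pre x r → y ∈ U := by
  obtain ⟨I, u, h1, h2⟩ := isOpen_pi_iff.mp hU x hx
  refine ⟨(I.sup id) + 1, fun y hy => h2 ?_⟩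
  intro i hi
  have : y i = x i := pre_eq_iff.mp hy i (Nat.lt_succ_of_le (Finset.le_sup (f := id) hi))
  rw [this]; exact (h1 i hi).2

lemma mem_of_closed {F : Set Cant} (hF : IsClosed F) {x : Cant}
    (h : ∀ r, ∃ y ∈ F, pre y r = pre x r) : x ∈ F := by
  rw [← hF.closure_eq]
  rw [mem_closure_iff]
  intro o ho hxo
  obtain ⟨r, hr⟩ := exists_pre_subset ho hxo
  obtain ⟨y, hyF, hyp⟩ := h r
  exact ⟨y, hr y hyp, hyF⟩


def S3 (S : Set Cant) : Prop :=
  ∃ U : ℕ → ℕ → Set Cant, (∀ k n, IsOpen (U k n)) ∧ S = ⋃ k, ⋂ n, U k n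

def P3 (S : Set Cant) : Prop :=
  ∃ F : ℕ → ℕ → Set Cant, (∀ k n, IsClosed (F k n)) ∧ S = ⋂ k, ⋃ n, F k n

lemma closed_eq_iInter {F : Set Cant} (hF : IsClosed F) :
    F = ⋂ r : ℕ, ⋃ y : {y : Cant // y ∈ F}, {x | pre x r = pre (y : Cant) r} := by
  ext x
  simp only [mem_iInter, mem_iUnion, mem_setOf_eq, Subtype.exists, exists_prop]
  constructor
  · intro hx r; exact ⟨x, hx, rfl⟩
  · intro h
    exact mem_of_closed hF (fun r => by obtain ⟨y, hy, hp⟩ := h r; exact ⟨y, hy, hp.symm⟩)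

lemma closed_gdelta {F : Set Cant} (hF : IsClosed F) :
    ∃ V : ℕ → Set Cant, (∀ r, IsOpen (V r)) ∧ F = ⋂ r, V r := by
  refine ⟨fun r => ⋃ y : {y : Cant // y ∈ F}, {x | pre x r = pre (y : Cant) r}, ?_, closed_eq_iInter hF⟩
  intro r
  exact isOpen_iUnion (fun y => cyl_isOpen y r)

lemma sigma2_S3 {S : Set Cant} (h : IsSigma2 S) : S3 S := by
  obtain ⟨F, hFc, rfl⟩ := h
  choose V hVo hVe using fun n => closed_gdelta (hFc n)
  exact ⟨V, hVo, by simp only [← hVe]⟩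

lemma sigma2_P3 {S : Set Cant} (h : IsSigma2 S) : P3 S := by
  obtain ⟨F, hFc, rfl⟩ := h
  exact ⟨fun _ n => F n, fun _ n => hFc n, by rw [iInter_const]⟩

lemma compl_S3 {S : Set Cant} (h : P3 S) : S3 Sᶜ := by
  obtain ⟨F, hFc, rfl⟩ := h
  refine ⟨fun k n => (F k n)ᶜ, fun k n => (hFc k n).isOpen_compl, ?_⟩
  simp [compl_iInter, compl_iUnion]

lemma compl_P3 {S : Set Cant} (h : S3 S) : P3 Sᶜ := by
  obtain ⟨U, hUo, rfl⟩ := h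
  refine ⟨fun k n => (U k n)ᶜ, fun k n => (hUo k n).isClosed_compl, ?_⟩
  simp [compl_iUnion, compl_iInter]

lemma inter_P3 {S T : Set Cant} (hS : P3 S) (hT : P3 T) : P3 (S ∩ T) := by
  obtain ⟨F, hFc, rfl⟩ := hS
  obtain ⟨G, hGc, rfl⟩ := hT
  refine ⟨fun k n => if k % 2 = 0 then F (k / 2) n else G (k / 2) n, ?_, ?_⟩
  · intro k n; dsimp only; split <;> [exact hFc _ n; exact hGc _ n]
  · ext x
    simp only [mem_inter_iff, mem_iInter, mem_iUnion]
    constructor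
    · rintro ⟨h1, h2⟩ k
      rcases Nat.even_or_odd k with he | ho
      · have : k % 2 = 0 := Nat.even_iff.mp he
        simpa [this] using h1 (k / 2)
      · have : k % 2 = 1 := Nat.odd_iff.mp ho
        simpa [this] using h2 (k / 2)
    · intro h
      constructor
      · intro k; have := h (2 * k); simpa [Nat.mul_div_cancel_left] using this
      · intro k; have := h (2 * k + 1)
        have h2 : (2 * k + 1) % 2 = 1 := by omega
        have h3 : (2 * k + 1) / 2 = k := by omega
        simpa [h2, h3] using this

lemma inter_S3 {S T : Set Cant} (hS : S3 S) (hT : S3 T) : S3 (S ∩ T) := by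
  obtain ⟨U, hUo, rfl⟩ := hS
  obtain ⟨V, hVo, rfl⟩ := hT
  refine ⟨fun k n => if n % 2 = 0 then U k.unpair.1 (n / 2) else V k.unpair.2 (n / 2), ?_, ?_⟩
  · intro k n; dsimp only; split <;> [exact hUo _ _; exact hVo _ _]
  · ext x
    simp only [mem_inter_iff, mem_iUnion, mem_iInter]
    constructor
    · rintro ⟨⟨k1, h1⟩, ⟨k2, h2⟩⟩
      refine ⟨Nat.pair k1 k2, fun n => ?_⟩
      rcases Nat.even_or_odd n with he | ho
      · have : n % 2 = 0 := Nat.even_iff.mp he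
        simp [this, Nat.unpair_pair]; exact h1 _
      · have : n % 2 = 1 := Nat.odd_iff.mp ho
        simp [this, Nat.unpair_pair]; exact h2 _
    · rintro ⟨k, h⟩
      constructor
      · refine ⟨k.unpair.1, fun n => ?_⟩
        have := h (2 * n); simpa [Nat.mul_div_cancel_left] using this
      · refine ⟨k.unpair.2, fun n => ?_⟩
        have := h (2 * n + 1)
        have h2 : (2 * n + 1) % 2 = 1 := by omega
        have h3 : (2 * n + 1) / 2 = n := by omega
        simpa [h2, h3] using this

lemma bc_S3_P3 {S : Set Cant} (h : IsBoolCombSigma2 S) : S3 S ∧ P3 S := by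
  induction h with
  | base h => exact ⟨sigma2_S3 h, sigma2_P3 h⟩
  | compl _ ih => exact ⟨compl_S3 ih.2, compl_P3 ih.1⟩
  | inter _ _ ih1 ih2 => exact ⟨inter_S3 ih1.1 ih2.1, inter_P3 ih1.2 ih2.2⟩


/-- the prefixes whose cylinder is contained in U -/
def PU (U : Set Cant) : Set (List Bool) := {u | ∀ y : Cant, pre y u.length = u → y ∈ U}

lemma mem_PU_self {U : Set Cant} {x : Cant} {m : ℕ} (h : pre x m ∈ PU U) : x ∈ U :=
  h x (by rw [pre_length])

lemma PU_of_open {U : Set Cant} (hU : IsOpen U) {x : Cant} (hx : x ∈ U) :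
    ∃ r, pre x r ∈ PU U := by
  obtain ⟨r, hr⟩ := exists_pre_subset hU hx
  exact ⟨r, fun y hy => hr y (by rwa [pre_length] at hy)⟩

lemma PU_ext {U : Set Cant} {x : Cant} {r m : ℕ} (hrm : r ≤ m) (h : pre x r ∈ PU U) :
    pre x m ∈ PU U := by
  intro y hy
  rw [pre_length] at hy
  apply h y
  rw [pre_length, ← pre_take hrm x, ← hy, pre_take hrm]

open Classical in
/-- number of "hits" strictly below m -/
noncomputable def cnt (P : ℕ → Set (List Bool)) (x : Cant) : ℕ → ℕ
  | 0 => 0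
  | m + 1 => cnt P x m + (if pre x m ∈ P (cnt P x m) then 1 else 0)

def hits (P : ℕ → Set (List Bool)) (x : Cant) (m : ℕ) : Prop :=
  pre x m ∈ P (cnt P x m)

lemma cnt_succ_of_hits {P x m} (h : hits P x m) : cnt P x (m + 1) = cnt P x m + 1 := by
  unfold hits at h; simp [cnt, h]

lemma cnt_succ_of_not_hits {P x m} (h : ¬ hits P x m) : cnt P x (m + 1) = cnt P x m := by
  unfold hits at h; simp [cnt, h]

lemma cnt_mono (P : ℕ → Set (List Bool)) (x : Cant) : Monotone (cnt P x) := by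
  apply monotone_nat_of_le_succ
  intro m
  by_cases h : hits P x m
  · rw [cnt_succ_of_hits h]; omega
  · rw [cnt_succ_of_not_hits h]

lemma cnt_succ_le {P x m} : cnt P x (m + 1) ≤ cnt P x m + 1 := by
  by_cases h : hits P x m
  · rw [cnt_succ_of_hits h]
  · rw [cnt_succ_of_not_hits h]; omega

lemma cnt_congr {P : ℕ → Set (List Bool)} {x y : Cant} {M : ℕ} (h : pre x M = pre y M) :
    ∀ m ≤ M, cnt P x m = cnt P y m := by
  intro m hm
  induction m with
  | zero => rfl
  | succ m ih =>
    have hm' : m ≤ M := by omega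
    have hpre : pre x m = pre y m := by rw [← pre_take hm' x, ← pre_take hm' y, h]
    have hc := ih hm'
    show cnt P x m + _ = cnt P y m + _
    rw [hc, hpre]

def Div (g : ℕ → ℕ) : Prop := ∀ c, ∃ m, c ≤ g m

lemma div_iff_hits {P : ℕ → Set (List Bool)} {x : Cant} :
    Div (cnt P x) ↔ ∀ N, ∃ m, N ≤ m ∧ hits P x m := by
  constructor
  · intro hd N
    by_contra hc
    push_neg at hc
    have hconst : ∀ d, cnt P x (N + d) = cnt P x N := by
      intro d
      induction d with
      | zero => rfl
      | succ d ih =>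
        have : N + (d + 1) = (N + d) + 1 := by omega
        rw [this, cnt_succ_of_not_hits (hc (N + d) (by omega)), ih]
    obtain ⟨m, hm⟩ := hd (cnt P x N + 1)
    rcases Nat.le_total m N with h1 | h1
    · have := cnt_mono P x h1; omega
    · have : cnt P x m = cnt P x N := by
        have e : m = N + (m - N) := by omega
        rw [e, hconst]
      omega
  · intro h c
    induction c with
    | zero => exact ⟨0, by omega⟩
    | succ c ih =>
      obtain ⟨m, hm⟩ := ih
      obtain ⟨m', hm', hh⟩ := h m
      refine ⟨m' + 1, ?_⟩
      have := cnt_mono P x hm'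
      rw [cnt_succ_of_hits hh]
      omega

lemma cnt_reaches {P : ℕ → Set (List Bool)} {x : Cant} (hd : Div (cnt P x)) (n : ℕ) :
    ∃ m, cnt P x m = n ∧ hits P x m := by
  obtain ⟨M, hM⟩ := hd (n + 1)
  have hex : ∃ M, n + 1 ≤ cnt P x M := ⟨M, hM⟩
  classical
  let M0 := Nat.find hex
  have hspec : n + 1 ≤ cnt P x M0 := Nat.find_spec hex
  have hM0 : M0 ≠ 0 := by
    intro h0
    rw [h0] at hspec
    simp [cnt] at hspec
  obtain ⟨M1, hM1⟩ : ∃ M1, M0 = M1 + 1 := ⟨M0 - 1, by omega⟩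
  rw [hM1] at hspec
  have hmin : ¬ (n + 1 ≤ cnt P x M1) := Nat.find_min hex (by omega)
  by_cases hh : hits P x M1
  · have := cnt_succ_of_hits hh
    refine ⟨M1, by omega, hh⟩
  · have := cnt_succ_of_not_hits hh
    omega

/-- main equivalence: x is in the Gδ set iff the count diverges -/
lemma iInter_open_iff_div {U : ℕ → Set Cant} (hU : ∀ n, IsOpen (U n)) (x : Cant) :
    (∀ n, x ∈ U n) ↔ Div (cnt (fun n => PU (U n)) x) := by
  set P : ℕ → Set (List Bool) := fun n => PU (U n) with hP
  constructor
  · intro hx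
    by_contra hc
    unfold Div at hc
    push_neg at hc
    obtain ⟨c, hcb⟩ := hc
    have hbdd : BddAbove (Set.range (cnt P x)) := ⟨c, by rintro _ ⟨m, rfl⟩; exact (hcb m).le⟩
    have hne : (Set.range (cnt P x)).Nonempty := ⟨cnt P x 0, mem_range_self 0⟩
    set c0 := sSup (Set.range (cnt P x)) with hc0
    obtain ⟨m0, hm0⟩ := Nat.sSup_mem hne hbdd
    obtain ⟨r, hr⟩ := PU_of_open (hU c0) (hx c0)
    set m := max m0 r with hm
    have h1 : cnt P x m ≤ c0 := le_csSup hbdd (mem_range_self m)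
    have h2 : c0 ≤ cnt P x m := by rw [hc0, ← hm0]; exact cnt_mono P x (le_max_left m0 r)
    have heq : cnt P x m = c0 := le_antisymm h1 h2
    have hhit : hits P x m := by
      unfold hits
      rw [heq]
      exact PU_ext (le_max_right m0 r) hr
    have := cnt_succ_of_hits hhit
    have h3 : cnt P x (m+1) ≤ c0 := le_csSup hbdd (mem_range_self (m+1))
    omega
  · intro hd n
    obtain ⟨m, hcm, hh⟩ := cnt_reaches hd n
    unfold hits at hh
    rw [hcm] at hh
    exact mem_PU_self hh


/-! gadget -/

open Classical in
/-- the sequence of emitted values -/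
noncomputable def nsg (P : ℕ → ℕ → Set (List Bool)) (x : Cant) (t : ℕ) : ℕ :=
  if hits (P t.unpair.2) x t.unpair.1 then Nat.pair t.unpair.2 0
  else Nat.pair t.unpair.2 (t.unpair.1 + 1)

noncomputable def fred (P : ℕ → ℕ → Set (List Bool)) (x : Cant) : Cant :=
  fun m => (List.range (m + 1)).any fun t => bpos (nsg P x) t == m

lemma le_bpos (g : ℕ → ℕ) (t : ℕ) : t ≤ bpos g t := Nat.le_add_left t _

lemma bpos_succ (g : ℕ → ℕ) (t : ℕ) : bpos g (t + 1) = bpos g t + g (t + 1) + 1 := by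
  unfold bpos
  rw [Finset.sum_range_succ]
  omega

lemma bpos_strictMono (g : ℕ → ℕ) : StrictMono (bpos g) := by
  apply strictMono_nat_of_lt_succ
  intro t
  rw [bpos_succ]
  omega

lemma fred_char (P : ℕ → ℕ → Set (List Bool)) (x : Cant) (m : ℕ) :
    fred P x m = true ↔ ∃ t, bpos (nsg P x) t = m := by
  unfold fred
  rw [List.any_eq_true]
  constructor
  · rintro ⟨t, _, ht⟩
    exact ⟨t, by simpa using ht⟩
  · rintro ⟨t, ht⟩
    refine ⟨t, List.mem_range.mpr ?_, by simpa using ht⟩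
    have := le_bpos (nsg P x) t
    omega

/-- strictly monotone enumerations of the same set coincide -/
lemma strictMono_unique {g h : ℕ → ℕ} (hg : StrictMono g) (hh : StrictMono h)
    (he : ∀ m, (∃ t, g t = m) ↔ (∃ t, h t = m)) : g = h := by
  funext n
  induction n using Nat.strong_induction_on with
  | _ n ih =>
    obtain ⟨m, hm⟩ := (he (g n)).mp ⟨n, rfl⟩
    rcases lt_trichotomy m n with h1 | h1 | h1
    · exfalso
      have e1 : g m = h m := ih m h1
      have := hg h1
      omega
    · rw [← h1] at hm ⊢
      exact hm.symm
    · exfalso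
      have h2 : h n < h m := hh h1
      obtain ⟨j, hj⟩ := (he (h n)).mpr ⟨n, rfl⟩
      rcases lt_trichotomy j n with h3 | h3 | h3
      · have e1 : g j = h j := ih j h3
        have h4 : h j < h n := hh h3
        omega
      · subst h3; omega
      · have := hg h3; omega

lemma bpos_inj {g h : ℕ → ℕ} (he : bpos g = bpos h) : g = h := by
  funext t
  induction t with
  | zero =>
    have := congrFun he 0
    unfold bpos at this
    simpa using this
  | succ t ih =>
    have e1 := congrFun he (t + 1)
    have e0 := congrFun he t
    rw [bpos_succ, bpos_succ, e0] at e1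
    omega

lemma ns_unique {g h : ℕ → ℕ}
    (he : ∀ m, (∃ t, bpos g t = m) ↔ (∃ t, bpos h t = m)) : g = h :=
  bpos_inj (strictMono_unique (bpos_strictMono g) (bpos_strictMono h) he)

lemma nat_unbounded_infinite {s : Set ℕ} (h : ∀ N, ∃ m ∈ s, N ≤ m) : s.Infinite := by
  intro hf
  obtain ⟨B, hB⟩ := hf.bddAbove
  obtain ⟨m, hm, hBm⟩ := h (B + 1)
  exact absurd (hB hm) (by omega)

lemma infinite_unbounded {s : Set ℕ} (h : s.Infinite) (N : ℕ) : ∃ m ∈ s, N ≤ m := by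
  by_contra hc
  push_neg at hc
  apply h
  apply Set.Finite.subset (Set.finite_Iio N)
  intro m hm
  exact hc m hm

/-- value analysis: some value occurs infinitely often in nsg iff some count diverges -/
lemma nsg_value_iff (P : ℕ → ℕ → Set (List Bool)) (x : Cant) :
    (∃ v, {t | nsg P x t = v}.Infinite) ↔ ∃ k, Div (cnt (P k) x) := by
  constructor
  · rintro ⟨v, hv⟩
    refine ⟨v.unpair.1, div_iff_hits.mpr ?_⟩
    intro N
    obtain ⟨t, ht, hle⟩ := infinite_unbounded hv
      (max (Nat.pair N v.unpair.1) (Nat.pair (v.unpair.2 - 1) v.unpair.1 + 1))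
    simp only [mem_setOf_eq, nsg] at ht
    by_cases hh : hits (P t.unpair.2) x t.unpair.1
    · rw [if_pos hh] at ht
      have h1 : t.unpair.2 = v.unpair.1 := by rw [← ht, Nat.unpair_pair]
      refine ⟨t.unpair.1, ?_, by rwa [h1] at hh⟩
      by_contra hN
      push_neg at hN
      have h2 : t < Nat.pair N v.unpair.1 := by
        have h3 := Nat.pair_lt_pair_left (b := t.unpair.2) hN
        rw [Nat.pair_unpair] at h3
        rwa [h1] at h3
      have := le_max_left (Nat.pair N v.unpair.1) (Nat.pair (v.unpair.2 - 1) v.unpair.1 + 1)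
      omega
    · rw [if_neg hh] at ht
      exfalso
      have h1a : t.unpair.2 = v.unpair.1 := by rw [← ht, Nat.unpair_pair]
      have h1b : t.unpair.1 + 1 = v.unpair.2 := by rw [← ht, Nat.unpair_pair]
      have h2 : t = Nat.pair (v.unpair.2 - 1) v.unpair.1 := by
        rw [← h1a, ← h1b]
        simp [Nat.pair_unpair]
      have := le_max_right (Nat.pair N v.unpair.1) (Nat.pair (v.unpair.2 - 1) v.unpair.1 + 1)
      omega
  · rintro ⟨k, hk⟩
    refine ⟨Nat.pair k 0, ?_⟩
    have hh := div_iff_hits.mp hk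
    apply nat_unbounded_infinite
    intro N
    obtain ⟨m, hm, hhit⟩ := hh N
    refine ⟨Nat.pair m k, ?_, ?_⟩
    · show nsg P x (Nat.pair m k) = Nat.pair k 0
      unfold nsg
      rw [Nat.unpair_pair]
      exact if_pos hhit
    · calc N ≤ m := hm
        _ ≤ Nat.pair m k := Nat.left_le_pair m k


lemma nsg_congr {P : ℕ → ℕ → Set (List Bool)} {x y : Cant} {t : ℕ}
    (h : pre x (t + 1) = pre y (t + 1)) : nsg P x t = nsg P y t := by
  have hs : t.unpair.1 ≤ t := Nat.unpair_left_le t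
  have hpre : pre x t.unpair.1 = pre y t.unpair.1 := by
    have hx := pre_take (m := t.unpair.1) (r := t + 1) (by omega) x
    have hy := pre_take (m := t.unpair.1) (r := t + 1) (by omega) y
    rw [← hx, ← hy, h]
  have hcnt : cnt (P t.unpair.2) x t.unpair.1 = cnt (P t.unpair.2) y t.unpair.1 :=
    cnt_congr h t.unpair.1 (by omega)
  unfold nsg hits
  rw [hpre, hcnt]

lemma fred_congr {P : ℕ → ℕ → Set (List Bool)} {x y : Cant} {m : ℕ}
    (h : pre x (m + 1) = pre y (m + 1)) : fred P x m = fred P y m := by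
  have hns : ∀ t ≤ m, nsg P x t = nsg P y t := by
    intro t ht
    apply nsg_congr
    have hx := pre_take (m := t + 1) (r := m + 1) (by omega) x
    have hy := pre_take (m := t + 1) (r := m + 1) (by omega) y
    rw [← hx, ← hy, h]
  have hbp : ∀ t ≤ m, bpos (nsg P x) t = bpos (nsg P y) t := by
    intro t ht
    unfold bpos
    congr 1
    apply Finset.sum_congr rfl
    intro i hi
    exact hns i (by simp at hi; omega)
  rw [Bool.eq_iff_iff, fred_char, fred_char]
  constructor
  · rintro ⟨t, ht⟩
    have htm : t ≤ m := le_trans (le_bpos _ t) ht.le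
    exact ⟨t, by rw [← hbp t htm]; exact ht⟩
  · rintro ⟨t, ht⟩
    have htm : t ≤ m := le_trans (le_bpos _ t) ht.le
    exact ⟨t, by rw [hbp t htm]; exact ht⟩

lemma fred_continuous (P : ℕ → ℕ → Set (List Bool)) : Continuous (fred P) := by
  apply continuous_pi
  intro m
  rw [continuous_discrete_rng]
  intro b
  apply isOpen_of_pre
  intro x hx
  refine ⟨m + 1, fun y hy => ?_⟩
  simp only [Set.mem_preimage, Set.mem_singleton_iff] at hx ⊢
  rw [fred_congr hy, hx]

lemma fred_mem_iff (P : ℕ → ℕ → Set (List Bool)) (x : Cant) :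
    fred P x ∈ Lsep ↔ ∃ k, Div (cnt (P k) x) := by
  constructor
  · rintro ⟨ns', hchar, v, hinf⟩
    have he : ns' = nsg P x := by
      apply ns_unique
      intro m
      rw [← hchar m, fred_char]
    rw [he] at hinf
    exact (nsg_value_iff P x).mp ⟨v, hinf⟩
  · rintro ⟨k, hk⟩
    exact ⟨nsg P x, fred_char P x, (nsg_value_iff P x).mpr ⟨k, hk⟩⟩

def enc (k n : ℕ) (u : List Bool) : ℕ := Encodable.encode ((k, n, u) : ℕ × ℕ × List Bool)

def DOs (k n : ℕ) : Set Cant := {x | ∃ m, x (enc k n (pre x m)) = false}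

lemma DOs_open (k n : ℕ) : IsOpen (DOs k n) := by
  apply isOpen_of_pre
  rintro x ⟨m, hm⟩
  refine ⟨max (m + 1) (enc k n (pre x m) + 1), fun y hy => ?_⟩
  have h1 : pre y m = pre x m := by
    have hly : m ≤ max (m + 1) (enc k n (pre x m) + 1) := le_trans (by omega) (le_max_left _ _)
    have hx := pre_take (m := m) (r := max (m + 1) (enc k n (pre x m) + 1)) hly x
    have hy' := pre_take (m := m) (r := max (m + 1) (enc k n (pre x m) + 1)) hly y
    rw [← hx, ← hy', hy]
  refine ⟨m, ?_⟩
  rw [h1]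
  have h2 : y (enc k n (pre x m)) = x (enc k n (pre x m)) :=
    pre_eq_iff.mp hy _ (lt_of_lt_of_le (by omega) (le_max_right _ _))
  rw [h2, hm]

theorem Lsep_not_bc (h : IsBoolCombSigma2 Lsep) : False := by
  classical
  obtain ⟨F, hFc, hFeq⟩ := (bc_S3_P3 h).2
  set P : ℕ → ℕ → Set (List Bool) := fun k n => PU (DOs k n) with hP
  set f : Cant → Cant := fred P with hf
  have hfc : Continuous f := fred_continuous P
  set F' : ℕ → ℕ → Set Cant := fun k n => f ⁻¹' (F k n) with hF'
  have hF'c : ∀ k n, IsClosed (F' k n) := fun k n => (hFc k n).preimage hfc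
  have hD : ∀ x : Cant, (∃ k, ∀ n, x ∈ DOs k n) ↔ (∀ k, ∃ n, x ∈ F' k n) := by
    intro x
    have h1 : (∃ k, ∀ n, x ∈ DOs k n) ↔ f x ∈ Lsep := by
      rw [hf, fred_mem_iff]
      constructor
      · rintro ⟨k, hk⟩
        exact ⟨k, (iInter_open_iff_div (fun n => DOs_open k n) x).mp hk⟩
      · rintro ⟨k, hk⟩
        exact ⟨k, (iInter_open_iff_div (fun n => DOs_open k n) x).mpr hk⟩
    rw [h1, hFeq]
    simp only [Set.mem_iInter, Set.mem_iUnion, hF', Set.mem_preimage]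
  set ε : Cant := fun j =>
    ((Encodable.decode (α := ℕ × ℕ × List Bool) j).elim false
      (fun p => if (∃ y ∈ F' p.1 p.2.1, pre y p.2.2.length = p.2.2) then true else false))
    with hε
  have hεval : ∀ k n u, (ε (enc k n u) = false) ↔ ¬ ∃ y ∈ F' k n, pre y u.length = u := by
    intro k n u
    rw [hε]
    show ((Encodable.decode (α := ℕ × ℕ × List Bool)
        (Encodable.encode ((k, n, u) : ℕ × ℕ × List Bool))).elim false _) = false ↔ _
    rw [Encodable.encodek, Option.elim_some]
    split_ifs with hc <;> simp [hc]
  have hmem : ∀ k n, (ε ∈ F' k n) ↔ ∀ m, ∃ y ∈ F' k n, pre y m = pre ε m := by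
    intro k n
    constructor
    · intro hx m; exact ⟨ε, hx, rfl⟩
    · exact mem_of_closed (hF'c k n)
  have step : ∀ k n, (ε ∈ DOs k n) ↔ ε ∉ F' k n := by
    intro k n
    have hm2 : ∀ m, (ε (enc k n (pre ε m)) = false) ↔ ¬ ∃ y ∈ F' k n, pre y m = pre ε m := by
      intro m
      have := hεval k n (pre ε m)
      rwa [pre_length] at this
    constructor
    · rintro ⟨m, hm⟩ hmemF
      exact (hm2 m).mp hm ((hmem k n).mp hmemF m)
    · intro hnot
      obtain ⟨m, hm⟩ := not_forall.mp (fun hall => hnot ((hmem k n).mpr hall))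
      exact ⟨m, (hm2 m).mpr hm⟩
  have final : (∃ k, ∀ n, ε ∈ DOs k n) ↔ ¬ (∃ k, ∀ n, ε ∈ DOs k n) := by
    constructor
    · intro hyes
      intro hyes2
      obtain ⟨k, hk⟩ := hyes
      obtain ⟨n, hn⟩ := (hD ε).mp hyes2 k
      exact (step k n).mp (hk n) hn
    · intro hno
      by_contra hno2
      apply hno
      apply (hD ε).mpr
      intro k
      by_contra hc
      push_neg at hc
      exact hno2 ⟨k, fun n => (step k n).mpr (hc n)⟩
  exact (iff_not_self final).elim


end NotBC

/-- The language `L_sep` is not a boolean combination of `Σ₂`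
subsets of `{a,b}^ω`. -/
theorem Lsep_not_boolCombSigma2 :
    ¬ IsBoolCombSigma2 Lsep := fun h => Lsep_not_bc h

end MaxReg
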